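/- For every ω ∈ (0,1), every t with 0 < t < ω, the function x ↦ sinh(ωx) e^{−t x coth(x)} − sinh((ω−t)x), extended to an odd function on ℝ, has a Lebesgue-integrable derivative on ℝ; consequently, for every ξ ∈ ℝ, ∫_ℝ e^{−ixξ} · ∂_x[ sinh(ωx) e^{−t c(x)} − sinh((ω−t)x) ] dx = iξ ∫_ℝ e^{−ixξ} [ sinh(ωx) e^{−t c(x)} − sinh((ω−t)x) ] dx = 2ξ ∫_0^∞ sin(xξ) [ sinh(ωx) e^{−t x coth(x)} − sinh((ω−t)x) ] dx. -/

import Mathlib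

open Real MeasureTheory Set Filter
/-- The continuous extension of `x ↦ x * coth x`. -/
noncomputable def cFun (x : ℝ) : ℝ := if x = 0 then 1 else x * Real.cosh x / Real.sinh x
noncomputable def cDeriv (x : ℝ) : ℝ :=
  if x = 0 then 0 else (Real.cosh x * Real.sinh x - x) / (Real.sinh x) ^ 2

lemma sinh_le_mul_exp {y : ℝ} (hy : 0 ≤ y) : Real.sinh y ≤ y * Real.exp y := by
  have h := Real.add_one_le_exp (-(2*y))
  have h2 : Real.exp (-(2*y)) * Real.exp y = Real.exp (-y) := by
    rw [← Real.exp_add]; ring_nf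
  rw [Real.sinh_eq]
  nlinarith [Real.exp_pos y, Real.exp_pos (-y), Real.exp_pos (-(2*y))]

lemma sinh_nonneg {y : ℝ} (hy : 0 ≤ y) : 0 ≤ Real.sinh y := by
  rcases eq_or_lt_of_le hy with rfl | h
  · simp
  · exact (Real.sinh_pos_iff.2 h).le

lemma abs_N_le {x : ℝ} (hx : 0 ≤ x) (hx1 : x ≤ 1) :
    |x * Real.cosh x - Real.sinh x| ≤ x ^ 3 * Real.exp x := by
  have key := norm_image_sub_le_of_norm_deriv_le_segment'
    (f := fun y => y * Real.cosh y - Real.sinh y) (f' := fun y => y * Real.sinh y)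
    (a := 0) (b := x) (C := x * (x * Real.exp x)) ?_ ?_ x (by constructor <;> linarith)
  · simpa using key.trans_eq (by ring)
  · intro y _
    have : HasDerivAt (fun y => y * Real.cosh y - Real.sinh y) (y * Real.sinh y) y := by
      have := ((hasDerivAt_id y).mul (Real.hasDerivAt_cosh y)).sub (Real.hasDerivAt_sinh y)
      apply this.congr_deriv
      simp only [id_eq]; ring
    exact this.hasDerivWithinAt
  · intro y hy
    have hy0 : 0 ≤ y := hy.1
    have hyx : y ≤ x := hy.2.le
    have hsy : Real.sinh y ≤ y * Real.exp y := sinh_le_mul_exp hy0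
    have hsn : 0 ≤ Real.sinh y := sinh_nonneg hy0
    rw [Real.norm_eq_abs, abs_of_nonneg (by positivity)]
    have e1 : Real.exp y ≤ Real.exp x := Real.exp_le_exp.2 hyx
    have step1 : y * Real.sinh y ≤ y * (y * Real.exp y) :=
      mul_le_mul_of_nonneg_left hsy hy0
    have step2 : y * (y * Real.exp y) ≤ x * (x * Real.exp x) := by
      apply mul_le_mul hyx (mul_le_mul hyx e1 (Real.exp_pos y).le hx) (by positivity) hx
    show y * Real.sinh y ≤ x * (x * Real.exp x)
    linarith

lemma abs_cFun_sub_one_aux {x : ℝ} (hx : 0 ≤ x) (hx1 : x ≤ 1) :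
    |cFun x - 1| ≤ Real.exp 1 * x ^ 2 := by
  rcases eq_or_lt_of_le hx with rfl | hxpos
  · simp [cFun]
  have hs : 0 < Real.sinh x := Real.sinh_pos_iff.2 hxpos
  have hxs : x ≤ Real.sinh x := (Real.self_lt_sinh_iff.2 hxpos).le
  have hN := abs_N_le hx hx1
  have hEq : cFun x - 1 = (x * Real.cosh x - Real.sinh x) / Real.sinh x := by
    rw [cFun, if_neg hxpos.ne']
    field_simp
  rw [hEq, abs_div, abs_of_pos hs, div_le_iff₀ hs]
  have hexp : Real.exp x ≤ Real.exp 1 := Real.exp_le_exp.2 hx1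
  have h4 : x * Real.exp x ≤ Real.sinh x * Real.exp 1 :=
    mul_le_mul hxs hexp (Real.exp_pos x).le hs.le
  calc |x * Real.cosh x - Real.sinh x| ≤ x ^ 3 * Real.exp x := hN
    _ = x ^ 2 * (x * Real.exp x) := by ring
    _ ≤ x ^ 2 * (Real.sinh x * Real.exp 1) := by
        apply mul_le_mul_of_nonneg_left h4 (by positivity)
    _ = Real.exp 1 * x ^ 2 * Real.sinh x := by ring

lemma cFun_even' (x : ℝ) : cFun (-x) = cFun x := by
  unfold cFun
  rcases eq_or_ne x 0 with h | h
  · simp [h]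
  · rw [if_neg (neg_ne_zero.2 h), if_neg h, Real.cosh_neg, Real.sinh_neg, neg_mul,
      neg_div_neg_eq]

lemma abs_cFun_sub_one {x : ℝ} (h1 : |x| ≤ 1) : |cFun x - 1| ≤ Real.exp 1 * x ^ 2 := by
  rcases le_or_gt 0 x with hx | hx
  · exact abs_cFun_sub_one_aux hx (by rwa [abs_of_nonneg hx] at h1)
  · have := abs_cFun_sub_one_aux (x := -x) (by linarith) (by rw [abs_of_neg hx] at h1; linarith)
    rwa [cFun_even', show (-x)^2 = x^2 by ring] at this

lemma hasDerivAt_cFun (x : ℝ) : HasDerivAt cFun (cDeriv x) x := by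
  rcases eq_or_ne x 0 with rfl | hx
  · rw [show cDeriv 0 = 0 from if_pos rfl, hasDerivAt_iff_tendsto]
    have h0 : cFun 0 = 1 := if_pos rfl
    apply squeeze_zero' (g := fun y : ℝ => Real.exp 1 * |y|)
    · filter_upwards with y; positivity
    · filter_upwards [Metric.ball_mem_nhds (0:ℝ) one_pos] with y hy
      simp only [Metric.mem_ball, dist_zero_right, Real.norm_eq_abs] at hy
      simp only [sub_zero, smul_zero, h0, Real.norm_eq_abs]
      rcases eq_or_ne y 0 with rfl | hy0
      · simp
      calc |y|⁻¹ * |cFun y - 1| ≤ |y|⁻¹ * (Real.exp 1 * y ^ 2) := by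
            apply mul_le_mul_of_nonneg_left (abs_cFun_sub_one hy.le) (by positivity)
        _ = Real.exp 1 * |y| := by
            rw [← sq_abs]
            field_simp
    · have h : Filter.Tendsto (fun y : ℝ => |y|) (nhds 0) (nhds 0) := by
        simpa using (continuous_abs.tendsto (0:ℝ))
      simpa using h.const_mul (Real.exp 1)
  · have hs : Real.sinh x ≠ 0 := Real.sinh_ne_zero.2 hx
    have h1 : HasDerivAt (fun y => y * Real.cosh y) (Real.cosh x + x * Real.sinh x) x := by
      have := (hasDerivAt_id x).mul (Real.hasDerivAt_cosh x)
      apply this.congr_deriv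
      simp only [id_eq]; ring
    have h2 := h1.div (Real.hasDerivAt_sinh x) hs
    have heq : (fun y => y * Real.cosh y / Real.sinh y) =ᶠ[nhds x] cFun := by
      filter_upwards [compl_singleton_mem_nhds hx] with y hy
      have hy' : y ≠ 0 := hy
      rw [cFun, if_neg hy']
    have h3 := h2.congr_of_eventuallyEq heq.symm
    apply h3.congr_deriv
    rw [cDeriv, if_neg hx]
    have hc := Real.cosh_sq x
    congr 1
    linear_combination (-x) * hc

lemma cFun_of_pos {x : ℝ} (hx : 0 < x) : cFun x = x * Real.cosh x / Real.sinh x := by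
  rw [cFun, if_neg hx.ne']

lemma self_le_cFun {x : ℝ} (hx : 0 < x) : x ≤ cFun x := by
  rw [cFun_of_pos hx, le_div_iff₀ (Real.sinh_pos_iff.2 hx)]
  exact mul_le_mul_of_nonneg_left (Real.sinh_lt_cosh x).le hx.le

lemma cFun_pos (x : ℝ) : 0 < cFun x := by
  rcases lt_trichotomy x 0 with hx | hx | hx
  · rw [← neg_neg x, cFun_even']
    have h : 0 < -x := by linarith
    exact lt_of_lt_of_le h (self_le_cFun h)
  · simp [hx, cFun]
  · exact lt_of_lt_of_le hx (self_le_cFun hx)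

lemma cDeriv_odd (x : ℝ) : cDeriv (-x) = -cDeriv x := by
  unfold cDeriv
  rcases eq_or_ne x 0 with h | h
  · simp [h]
  · rw [if_neg (neg_ne_zero.2 h), if_neg h, Real.cosh_neg, Real.sinh_neg]
    ring

lemma two_le_exp_one : (2:ℝ) ≤ Real.exp 1 := by
  have := Real.add_one_le_exp 1
  linarith

lemma cDeriv_nonneg {x : ℝ} (hx : 0 ≤ x) : 0 ≤ cDeriv x := by
  rcases eq_or_lt_of_le hx with rfl | hx
  · simp [cDeriv]
  rw [cDeriv, if_neg hx.ne']
  have hs : 0 < Real.sinh x := Real.sinh_pos_iff.2 hx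
  apply div_nonneg _ (by positivity)
  have h1 : (1:ℝ) ≤ Real.cosh x := Real.one_le_cosh x
  have h2 : x ≤ Real.sinh x := (Real.self_lt_sinh_iff.2 hx).le
  nlinarith

lemma cDeriv_le_one {x : ℝ} (hx : 0 ≤ x) : cDeriv x ≤ 1 := by
  rcases eq_or_lt_of_le hx with rfl | hx
  · simp [cDeriv]
  rw [cDeriv, if_neg hx.ne']
  have hs : 0 < Real.sinh x := Real.sinh_pos_iff.2 hx
  rw [div_le_one (by positivity)]
  -- cosh sinh - x ≤ sinh²  ⟸  sinh (cosh - sinh) ≤ x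
  have h1 : Real.cosh x - Real.sinh x = Real.exp (-x) := Real.cosh_sub_sinh x
  have h2 : Real.sinh x ≤ x * Real.exp x := sinh_le_mul_exp hx.le
  have h3 : Real.exp x * Real.exp (-x) = 1 := by rw [← Real.exp_add]; simp
  have h4 : Real.sinh x * Real.exp (-x) ≤ x := by
    have := mul_le_mul_of_nonneg_right h2 (Real.exp_pos (-x)).le
    calc Real.sinh x * Real.exp (-x) ≤ x * Real.exp x * Real.exp (-x) := this
      _ = x * (Real.exp x * Real.exp (-x)) := by ring
      _ = x := by rw [h3]; ring
  nlinarith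

lemma abs_cDeriv_le_one (x : ℝ) : |cDeriv x| ≤ 1 := by
  rcases le_or_gt 0 x with hx | hx
  · rw [abs_of_nonneg (cDeriv_nonneg hx)]; exact cDeriv_le_one hx
  · have h : cDeriv x = -cDeriv (-x) := by rw [cDeriv_odd]; ring
    rw [h, abs_neg, abs_of_nonneg (cDeriv_nonneg (by linarith))]
    exact cDeriv_le_one (by linarith)

lemma exp_quarter_le_sinh {x : ℝ} (hx : 1 ≤ x) : Real.exp x / 4 ≤ Real.sinh x := by
  have h2 : (2:ℝ) ≤ Real.exp x := le_trans two_le_exp_one (Real.exp_le_exp.2 hx)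
  have h3 : Real.exp x * Real.exp (-x) = 1 := by rw [← Real.exp_add]; simp
  have h4 : Real.exp (-x) ≤ Real.exp x / 2 := by
    nlinarith [Real.exp_pos (-x), Real.exp_pos x]
  rw [Real.sinh_eq]
  have : Real.exp (-x) = (Real.exp x)⁻¹ := Real.exp_neg x
  nlinarith [Real.exp_pos x]

lemma cFun_sub_le {x : ℝ} (hx : 1 ≤ x) : cFun x - x ≤ 4 * x * Real.exp (-(2*x)) := by
  have hx0 : 0 < x := by linarith
  have hs : 0 < Real.sinh x := Real.sinh_pos_iff.2 hx0
  have heq : cFun x - x = x * Real.exp (-x) / Real.sinh x := by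
    rw [cFun_of_pos hx0]
    field_simp
    linear_combination (Real.cosh_sub_sinh x)
  rw [heq, div_le_iff₀ hs]
  have key : 4 * x * Real.exp (-(2*x)) * (Real.exp x / 4) ≤
      4 * x * Real.exp (-(2*x)) * Real.sinh x :=
    mul_le_mul_of_nonneg_left (exp_quarter_le_sinh hx) (by positivity)
  have id1 : 4 * x * Real.exp (-(2*x)) * (Real.exp x / 4) = x * Real.exp (-x) := by
    rw [show x * Real.exp (-x) = x * (Real.exp (-(2*x)) * Real.exp x) by
      rw [← Real.exp_add]; ring_nf]
    ring
  linarith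

lemma abs_one_sub_cDeriv {x : ℝ} (hx : 1 ≤ x) :
    |1 - cDeriv x| ≤ 20 * x * Real.exp (-(2*x)) := by
  have hx0 : 0 < x := by linarith
  have hs : 0 < Real.sinh x := Real.sinh_pos_iff.2 hx0
  have hlb := exp_quarter_le_sinh hx
  have heq : 1 - cDeriv x = (x - Real.sinh x * Real.exp (-x)) / (Real.sinh x)^2 := by
    rw [cDeriv, if_neg hx0.ne']
    field_simp
    linear_combination (-(Real.sinh x)) * (Real.cosh_sub_sinh x)
  rw [heq, abs_div, abs_of_pos (pow_pos hs 2), div_le_iff₀ (pow_pos hs 2)]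
  have habs : |x - Real.sinh x * Real.exp (-x)| ≤ x + Real.sinh x * Real.exp (-x) := by
    rw [abs_sub_le_iff]
    constructor <;> nlinarith [hs.le, (Real.exp_pos (-x)).le, hx0.le,
      mul_nonneg hs.le (Real.exp_pos (-x)).le]
  refine habs.trans ?_
  set S := Real.sinh x with hS
  set A := Real.exp x with hA
  set B := Real.exp (-(2*x)) with hB
  have e1 : B * A = Real.exp (-x) := by
    rw [hB, hA, ← Real.exp_add, show -(2*x) + x = -x by ring]
  have e2 : B * (A * A) = 1 := by
    rw [hB, hA, ← Real.exp_add, ← Real.exp_add, show -(2*x) + (x + x) = 0 by ring,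
      Real.exp_zero]
  have hApos : 0 < A := Real.exp_pos x
  have hBpos : 0 < B := Real.exp_pos _
  have hA4S : A ≤ 4 * S := by linarith
  have hAA : A * A ≤ 16 * S^2 := by nlinarith
  calc x + S * Real.exp (-x) = x * (B * (A * A)) + S * (B * A) := by rw [e2, e1]; ring
    _ ≤ 16 * x * B * S^2 + 4 * x * B * S^2 := by
        have p1 : x * (B * (A * A)) ≤ x * (B * (16 * S^2)) := by
          apply mul_le_mul_of_nonneg_left _ hx0.le
          exact mul_le_mul_of_nonneg_left hAA hBpos.le
        have p2 : S * (B * A) ≤ S * (B * (4 * S)) := by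
          apply mul_le_mul_of_nonneg_left _ hs.le
          exact mul_le_mul_of_nonneg_left hA4S hBpos.le
        have p3 : S * (B * (4 * S)) ≤ x * (B * (4 * S * S)) := by
          have t : 0 ≤ (x - 1) * B * (S * S) :=
            mul_nonneg (mul_nonneg (by linarith) hBpos.le) (mul_nonneg hs.le hs.le)
          nlinarith [t]
        nlinarith
    _ = 20 * x * B * S^2 := by ring

/-- The (odd) function `g(x) = sinh(ωx) e^{-t c(x)} - sinh((ω-t)x)` on `ℝ`. -/
noncomputable def gFun (t ω : ℝ) (x : ℝ) : ℝ :=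
  Real.sinh (ω * x) * Real.exp (-t * cFun x) - Real.sinh ((ω - t) * x)

noncomputable def gDeriv (t ω : ℝ) (x : ℝ) : ℝ :=
  ω * Real.cosh (ω * x) * Real.exp (-t * cFun x)
    - t * cDeriv x * Real.sinh (ω * x) * Real.exp (-t * cFun x)
    - (ω - t) * Real.cosh ((ω - t) * x)

lemma hasDerivAt_gFun (t ω x : ℝ) : HasDerivAt (gFun t ω) (gDeriv t ω x) x := by
  have h1 : HasDerivAt (fun y : ℝ => Real.sinh (ω * y)) (Real.cosh (ω * x) * ω) x := by
    simpa [Function.comp_def] using (Real.hasDerivAt_sinh (ω * x)).comp x ((hasDerivAt_id x).const_mul ω)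
  have h2 : HasDerivAt (fun y : ℝ => -t * cFun y) (-t * cDeriv x) x :=
    (hasDerivAt_cFun x).const_mul (-t)
  have h3 : HasDerivAt (fun y : ℝ => Real.exp (-t * cFun y))
      (Real.exp (-t * cFun x) * (-t * cDeriv x)) x := h2.exp
  have h4 : HasDerivAt (fun y : ℝ => Real.sinh ((ω - t) * y)) (Real.cosh ((ω - t) * x) * (ω - t)) x := by
    simpa [Function.comp_def] using (Real.hasDerivAt_sinh ((ω - t) * x)).comp x ((hasDerivAt_id x).const_mul (ω - t))
  have h5 := (h1.mul h3).sub h4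
  apply h5.congr_deriv
  unfold gDeriv
  ring

lemma gFun_odd (t ω x : ℝ) : gFun t ω (-x) = -gFun t ω x := by
  unfold gFun
  simp only [mul_neg, Real.sinh_neg, cFun_even']
  ring

lemma gDeriv_even (t ω x : ℝ) : gDeriv t ω (-x) = gDeriv t ω x := by
  unfold gDeriv
  simp only [mul_neg, Real.sinh_neg, Real.cosh_neg, cFun_even', cDeriv_odd]
  ring

lemma deriv_gFun (t ω : ℝ) : deriv (gFun t ω) = gDeriv t ω :=
  funext fun x => (hasDerivAt_gFun t ω x).deriv

lemma exp_tc_le {t x : ℝ} (ht : 0 ≤ t) (hx : 0 < x) :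
    Real.exp (-t * cFun x) ≤ Real.exp (-(t * x)) :=
  Real.exp_le_exp.2 (by nlinarith [self_le_cFun hx])

lemma exp_tc_lb {t x : ℝ} (ht : 0 < t) (ht1 : t ≤ 1) (hx : 1 ≤ x) :
    Real.exp (-(t * x)) - Real.exp (-t * cFun x) ≤
      Real.exp (-(t * x)) * (4 * x * Real.exp (-(2 * x))) := by
  have hx0 : 0 < x := by linarith
  have hc0 : 0 ≤ cFun x - x := by linarith [self_le_cFun hx0]
  have hsplit : Real.exp (-t * cFun x) =
      Real.exp (-(t * x)) * Real.exp (-(t * (cFun x - x))) := by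
    rw [← Real.exp_add]; congr 1; ring
  have h1 : 1 - Real.exp (-(t * (cFun x - x))) ≤ t * (cFun x - x) := by
    have := Real.add_one_le_exp (-(t * (cFun x - x))); linarith
  have h2 : t * (cFun x - x) ≤ 4 * x * Real.exp (-(2 * x)) := by
    have h3 := cFun_sub_le hx
    nlinarith
  calc Real.exp (-(t * x)) - Real.exp (-t * cFun x)
      = Real.exp (-(t * x)) * (1 - Real.exp (-(t * (cFun x - x)))) := by rw [hsplit]; ring
    _ ≤ Real.exp (-(t * x)) * (4 * x * Real.exp (-(2 * x))) :=
        mul_le_mul_of_nonneg_left (h1.trans h2) (Real.exp_pos _).le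

section decay

variable {t ω : ℝ} (hω0 : 0 < ω) (hω1 : ω < 1) (ht : 0 < t) (htω : t < ω)

lemma x_exp_le {x : ℝ} (hx : 0 ≤ x) : x * Real.exp (-x) ≤ 2 * Real.exp (-(x/2)) := by
  have hx2 : x ≤ 2 * Real.exp (x/2) := by
    have := Real.add_one_le_exp (x/2); linarith
  calc x * Real.exp (-x) ≤ 2 * Real.exp (x/2) * Real.exp (-x) :=
        mul_le_mul_of_nonneg_right hx2 (Real.exp_pos _).le
    _ = 2 * Real.exp (-(x/2)) := by
        rw [mul_assoc, ← Real.exp_add]; congr 2; ring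

include hω0 hω1 ht htω in
lemma T1_bound {x : ℝ} (hx : 0 ≤ x) :
    |(ω * Real.cosh (ω * x) - t * Real.sinh (ω * x)) * Real.exp (-(t * x))
      - (ω - t) * Real.cosh ((ω - t) * x)| ≤ 2 * Real.exp (-((ω - t) * x)) := by
  have i1 : Real.exp (ω * x) * Real.exp (-(t * x)) = Real.exp ((ω - t) * x) := by
    rw [← Real.exp_add]; congr 1; ring
  have i2 : Real.exp (-(ω * x)) * Real.exp (-(t * x)) = Real.exp (-((ω + t) * x)) := by
    rw [← Real.exp_add]; congr 1; ring
  have hT1 : (ω * Real.cosh (ω * x) - t * Real.sinh (ω * x)) * Real.exp (-(t * x))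
      - (ω - t) * Real.cosh ((ω - t) * x)
      = ((ω + t) * Real.exp (-((ω + t) * x)) - (ω - t) * Real.exp (-((ω - t) * x))) / 2 := by
    rw [Real.cosh_eq, Real.sinh_eq, Real.cosh_eq]
    linear_combination ((ω - t) / 2) * i1 + ((ω + t) / 2) * i2
  rw [hT1]
  have hQ : Real.exp (-((ω + t) * x)) ≤ Real.exp (-((ω - t) * x)) :=
    Real.exp_le_exp.2 (by nlinarith)
  have hE := Real.exp_pos (-((ω - t) * x))
  have hQ0 := Real.exp_pos (-((ω + t) * x))
  rw [abs_le]
  constructor <;> nlinarith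

include ht htω in
lemma factor2_bound (ht1 : t ≤ 1) {x : ℝ} (hx : 1 ≤ x) :
    |Real.exp (-t * cFun x) - Real.exp (-(t * x))| ≤
      Real.exp (-(t * x)) * (4 * x * Real.exp (-(2 * x))) := by
  have h1 := exp_tc_le ht.le (show (0:ℝ) < x by linarith)
  have h2 := exp_tc_lb ht ht1 hx
  rw [abs_sub_comm, abs_of_nonneg (by linarith)]
  exact h2

include hω0 hω1 ht htω in
lemma gDeriv_decay {x : ℝ} (hx : 1 ≤ x) :
    |gDeriv t ω x| ≤ 2 * Real.exp (-((ω - t) * x)) + 28 * Real.exp (-(x/2)) := by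
  have hx0 : (0:ℝ) ≤ x := by linarith
  have ht1 : t ≤ 1 := by linarith
  have hsum : gDeriv t ω x =
      ((ω * Real.cosh (ω * x) - t * Real.sinh (ω * x)) * Real.exp (-(t * x))
        - (ω - t) * Real.cosh ((ω - t) * x))
      + (ω * Real.cosh (ω * x) - t * Real.sinh (ω * x)) *
          (Real.exp (-t * cFun x) - Real.exp (-(t * x)))
      + t * (1 - cDeriv x) * Real.sinh (ω * x) * Real.exp (-t * cFun x) := by
    unfold gDeriv; ring
  -- common facts
  have hsinh0 : 0 ≤ Real.sinh (ω * x) := sinh_nonneg (by positivity)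
  have hcosh0 : 0 < Real.cosh (ω * x) := Real.cosh_pos _
  have hfac1 : |ω * Real.cosh (ω * x) - t * Real.sinh (ω * x)| ≤ Real.exp (ω * x) := by
    have h := Real.cosh_add_sinh (ω * x)
    rw [abs_le]
    constructor <;> nlinarith
  have hsinh_le : Real.sinh (ω * x) ≤ Real.exp (ω * x) / 2 := by
    rw [Real.sinh_eq]
    have := Real.exp_pos (-(ω * x))
    linarith
  have k1 : Real.exp (ω * x) * Real.exp (-(t * x)) * Real.exp (-(2 * x)) =
      Real.exp ((ω - t - 2) * x) := by
    rw [← Real.exp_add, ← Real.exp_add]; congr 1; ring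
  have k2 : Real.exp ((ω - t - 2) * x) ≤ Real.exp (-x) :=
    Real.exp_le_exp.2 (by nlinarith)
  have k3 := x_exp_le hx0
  -- T2 bound
  have hT2 : |(ω * Real.cosh (ω * x) - t * Real.sinh (ω * x)) *
      (Real.exp (-t * cFun x) - Real.exp (-(t * x)))| ≤ 8 * Real.exp (-(x/2)) := by
    rw [abs_mul]
    have := mul_le_mul hfac1 (factor2_bound ht htω ht1 hx) (abs_nonneg _) (Real.exp_pos _).le
    refine this.trans ?_
    have e1 : Real.exp (ω * x) * (Real.exp (-(t * x)) * (4 * x * Real.exp (-(2 * x))))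
        = 4 * x * Real.exp ((ω - t - 2) * x) := by rw [← k1]; ring
    rw [e1]
    have e2 : 4 * x * Real.exp ((ω - t - 2) * x) ≤ 4 * x * Real.exp (-x) :=
      mul_le_mul_of_nonneg_left k2 (by positivity)
    refine e2.trans ?_
    nlinarith
  -- T3 bound
  have hT3 : |t * (1 - cDeriv x) * Real.sinh (ω * x) * Real.exp (-t * cFun x)| ≤
      20 * Real.exp (-(x/2)) := by
    have hs := abs_one_sub_cDeriv hx
    have hexp_le : Real.exp (-t * cFun x) ≤ Real.exp (-(t * x)) :=
      exp_tc_le ht.le (by linarith)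
    rw [abs_mul, abs_mul, abs_mul, abs_of_pos ht, abs_of_nonneg hsinh0,
      abs_of_pos (Real.exp_pos _)]
    calc t * |1 - cDeriv x| * Real.sinh (ω * x) * Real.exp (-t * cFun x)
        ≤ 1 * (20 * x * Real.exp (-(2 * x))) * (Real.exp (ω * x) / 2) * Real.exp (-(t * x)) := by
          apply mul_le_mul _ hexp_le (Real.exp_pos _).le (by positivity)
          apply mul_le_mul _ hsinh_le hsinh0 (by positivity)
          apply mul_le_mul ht1 hs (abs_nonneg _) zero_le_one
      _ = 10 * x * (Real.exp (ω * x) * Real.exp (-(t * x)) * Real.exp (-(2 * x))) := by ring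
      _ = 10 * x * Real.exp ((ω - t - 2) * x) := by rw [k1]
      _ ≤ 10 * x * Real.exp (-x) := mul_le_mul_of_nonneg_left k2 (by positivity)
      _ ≤ 20 * Real.exp (-(x/2)) := by nlinarith
  have hT1 := T1_bound hω0 hω1 ht htω hx0
  rw [hsum]
  have ha1 := abs_add_le
    (((ω * Real.cosh (ω * x) - t * Real.sinh (ω * x)) * Real.exp (-(t * x))
        - (ω - t) * Real.cosh ((ω - t) * x))
      + (ω * Real.cosh (ω * x) - t * Real.sinh (ω * x)) *
          (Real.exp (-t * cFun x) - Real.exp (-(t * x))))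
    (t * (1 - cDeriv x) * Real.sinh (ω * x) * Real.exp (-t * cFun x))
  have ha2 := abs_add_le
    ((ω * Real.cosh (ω * x) - t * Real.sinh (ω * x)) * Real.exp (-(t * x))
        - (ω - t) * Real.cosh ((ω - t) * x))
    ((ω * Real.cosh (ω * x) - t * Real.sinh (ω * x)) *
          (Real.exp (-t * cFun x) - Real.exp (-(t * x))))
  linarith

include hω0 hω1 ht htω in
lemma gFun_decay {x : ℝ} (hx : 1 ≤ x) :
    |gFun t ω x| ≤ 2 * Real.exp (-((ω - t) * x)) + 28 * Real.exp (-(x/2)) := by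
  have hx0 : (0:ℝ) ≤ x := by linarith
  have ht1 : t ≤ 1 := by linarith
  have i1 : Real.exp (ω * x) * Real.exp (-(t * x)) = Real.exp ((ω - t) * x) := by
    rw [← Real.exp_add]; congr 1; ring
  have i2 : Real.exp (-(ω * x)) * Real.exp (-(t * x)) = Real.exp (-((ω + t) * x)) := by
    rw [← Real.exp_add]; congr 1; ring
  have hsum : gFun t ω x =
      (Real.sinh (ω * x) * Real.exp (-(t * x)) - Real.sinh ((ω - t) * x))
      + Real.sinh (ω * x) * (Real.exp (-t * cFun x) - Real.exp (-(t * x))) := by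
    unfold gFun; ring
  have hU1 : Real.sinh (ω * x) * Real.exp (-(t * x)) - Real.sinh ((ω - t) * x)
      = (Real.exp (-((ω - t) * x)) - Real.exp (-((ω + t) * x))) / 2 := by
    rw [Real.sinh_eq, Real.sinh_eq]
    linear_combination (1/2) * i1 - (1/2) * i2
  have hQ : Real.exp (-((ω + t) * x)) ≤ Real.exp (-((ω - t) * x)) :=
    Real.exp_le_exp.2 (by nlinarith)
  have hU1b : |Real.sinh (ω * x) * Real.exp (-(t * x)) - Real.sinh ((ω - t) * x)|
      ≤ 2 * Real.exp (-((ω - t) * x)) := by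
    rw [hU1, abs_le]
    have := Real.exp_pos (-((ω + t) * x))
    have := Real.exp_pos (-((ω - t) * x))
    constructor <;> nlinarith
  have hsinh0 : 0 ≤ Real.sinh (ω * x) := sinh_nonneg (by positivity)
  have hsinh_le : Real.sinh (ω * x) ≤ Real.exp (ω * x) / 2 := by
    rw [Real.sinh_eq]
    have := Real.exp_pos (-(ω * x))
    linarith
  have k1 : Real.exp (ω * x) * Real.exp (-(t * x)) * Real.exp (-(2 * x)) =
      Real.exp ((ω - t - 2) * x) := by
    rw [← Real.exp_add, ← Real.exp_add]; congr 1; ring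
  have k2 : Real.exp ((ω - t - 2) * x) ≤ Real.exp (-x) :=
    Real.exp_le_exp.2 (by nlinarith)
  have k3 := x_exp_le hx0
  have hU2 : |Real.sinh (ω * x) * (Real.exp (-t * cFun x) - Real.exp (-(t * x)))| ≤
      28 * Real.exp (-(x/2)) := by
    rw [abs_mul, abs_of_nonneg hsinh0]
    calc Real.sinh (ω * x) * |Real.exp (-t * cFun x) - Real.exp (-(t * x))|
        ≤ (Real.exp (ω * x) / 2) * (Real.exp (-(t * x)) * (4 * x * Real.exp (-(2 * x)))) := by
          apply mul_le_mul hsinh_le (factor2_bound ht htω ht1 hx) (abs_nonneg _) (by positivity)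
      _ = 2 * x * (Real.exp (ω * x) * Real.exp (-(t * x)) * Real.exp (-(2 * x))) := by ring
      _ = 2 * x * Real.exp ((ω - t - 2) * x) := by rw [k1]
      _ ≤ 2 * x * Real.exp (-x) := mul_le_mul_of_nonneg_left k2 (by positivity)
      _ ≤ 28 * Real.exp (-(x/2)) := by nlinarith [Real.exp_pos (-(x/2))]
  rw [hsum]
  have ha1 := abs_add_le
    (Real.sinh (ω * x) * Real.exp (-(t * x)) - Real.sinh ((ω - t) * x))
    (Real.sinh (ω * x) * (Real.exp (-t * cFun x) - Real.exp (-(t * x))))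
  linarith

end decay

lemma cosh_one_le_exp_one : Real.cosh 1 ≤ Real.exp 1 := by
  rw [Real.cosh_eq]
  have h1 : Real.exp (-1) ≤ Real.exp 1 := Real.exp_le_exp.2 (by norm_num)
  linarith

section global

variable {t ω : ℝ} (hω0 : 0 < ω) (hω1 : ω < 1) (ht : 0 < t) (htω : t < ω)

include hω0 hω1 ht htω in
lemma gDeriv_crude {x : ℝ} (hx : |x| ≤ 1) : |gDeriv t ω x| ≤ 3 * Real.exp 1 := by
  have hE : Real.exp (-t * cFun x) ≤ 1 := by
    rw [Real.exp_le_one_iff]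
    nlinarith [cFun_pos x]
  have hEpos := Real.exp_pos (-t * cFun x)
  have hc1 : Real.cosh (ω * x) ≤ Real.cosh 1 := by
    rw [Real.cosh_le_cosh]
    rw [abs_mul, abs_of_pos hω0]
    calc ω * |x| ≤ 1 * 1 := by
          apply mul_le_mul hω1.le hx (abs_nonneg _) zero_le_one
      _ ≤ |(1:ℝ)| := by norm_num
  have hc2 : Real.cosh ((ω - t) * x) ≤ Real.cosh 1 := by
    rw [Real.cosh_le_cosh, abs_mul, abs_of_pos (by linarith : (0:ℝ) < ω - t)]
    calc (ω - t) * |x| ≤ 1 * 1 := by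
          apply mul_le_mul (by linarith) hx (abs_nonneg _) zero_le_one
      _ ≤ |(1:ℝ)| := by norm_num
  have hs1 : |Real.sinh (ω * x)| ≤ Real.cosh 1 := by
    rw [Real.abs_sinh]
    calc Real.sinh |ω * x| ≤ Real.sinh 1 := by
          apply Real.sinh_le_sinh.2
          rw [abs_mul, abs_of_pos hω0]
          calc ω * |x| ≤ 1 * 1 := by
                apply mul_le_mul hω1.le hx (abs_nonneg _) zero_le_one
            _ = 1 := by norm_num
      _ ≤ Real.cosh 1 := (Real.sinh_lt_cosh 1).le
  have hcd := abs_cDeriv_le_one x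
  have hcosh1 : (0:ℝ) < Real.cosh 1 := Real.cosh_pos 1
  have h1 : |ω * Real.cosh (ω * x) * Real.exp (-t * cFun x)| ≤ Real.cosh 1 := by
    rw [abs_mul, abs_mul, abs_of_pos hω0, abs_of_pos (Real.cosh_pos _),
      abs_of_pos hEpos]
    calc ω * Real.cosh (ω * x) * Real.exp (-t * cFun x) ≤ 1 * Real.cosh 1 * 1 := by
          apply mul_le_mul _ hE hEpos.le (by positivity)
          apply mul_le_mul hω1.le hc1 (Real.cosh_pos _).le zero_le_one
      _ = Real.cosh 1 := by ring
  have h2 : |t * cDeriv x * Real.sinh (ω * x) * Real.exp (-t * cFun x)| ≤ Real.cosh 1 := by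
    rw [abs_mul, abs_mul, abs_mul, abs_of_pos ht, abs_of_pos hEpos]
    have ht1 : t ≤ 1 := by linarith
    calc t * |cDeriv x| * |Real.sinh (ω * x)| * Real.exp (-t * cFun x)
        ≤ 1 * 1 * Real.cosh 1 * 1 := by
          apply mul_le_mul _ hE hEpos.le (by positivity)
          apply mul_le_mul _ hs1 (abs_nonneg _) (by norm_num)
          apply mul_le_mul ht1 hcd (abs_nonneg _) zero_le_one
      _ = Real.cosh 1 := by ring
  have h3 : |(ω - t) * Real.cosh ((ω - t) * x)| ≤ Real.cosh 1 := by
    rw [abs_mul, abs_of_pos (by linarith : (0:ℝ) < ω - t), abs_of_pos (Real.cosh_pos _)]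
    nlinarith [Real.cosh_pos ((ω - t) * x)]
  have hsum : |gDeriv t ω x| ≤ |ω * Real.cosh (ω * x) * Real.exp (-t * cFun x)|
      + |t * cDeriv x * Real.sinh (ω * x) * Real.exp (-t * cFun x)|
      + |(ω - t) * Real.cosh ((ω - t) * x)| := by
    unfold gDeriv
    exact (abs_sub _ _).trans (add_le_add_left (abs_sub _ _) _)
  have he1 := cosh_one_le_exp_one
  linarith

include hω0 hω1 ht htω in
lemma gFun_crude {x : ℝ} (hx : |x| ≤ 1) : |gFun t ω x| ≤ 3 * Real.exp 1 := by
  have hE : Real.exp (-t * cFun x) ≤ 1 := by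
    rw [Real.exp_le_one_iff]
    nlinarith [cFun_pos x]
  have hEpos := Real.exp_pos (-t * cFun x)
  have hs1 : |Real.sinh (ω * x)| ≤ Real.cosh 1 := by
    rw [Real.abs_sinh]
    calc Real.sinh |ω * x| ≤ Real.sinh 1 := by
          apply Real.sinh_le_sinh.2
          rw [abs_mul, abs_of_pos hω0]
          calc ω * |x| ≤ 1 * 1 := by
                apply mul_le_mul hω1.le hx (abs_nonneg _) zero_le_one
            _ = 1 := by norm_num
      _ ≤ Real.cosh 1 := (Real.sinh_lt_cosh 1).le
  have hs2 : |Real.sinh ((ω - t) * x)| ≤ Real.cosh 1 := by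
    rw [Real.abs_sinh]
    calc Real.sinh |(ω - t) * x| ≤ Real.sinh 1 := by
          apply Real.sinh_le_sinh.2
          rw [abs_mul, abs_of_pos (by linarith : (0:ℝ) < ω - t)]
          calc (ω - t) * |x| ≤ 1 * 1 := by
                apply mul_le_mul (by linarith) hx (abs_nonneg _) zero_le_one
            _ = 1 := by norm_num
      _ ≤ Real.cosh 1 := (Real.sinh_lt_cosh 1).le
  have h1 : |Real.sinh (ω * x) * Real.exp (-t * cFun x)| ≤ Real.cosh 1 := by
    rw [abs_mul, abs_of_pos hEpos]
    nlinarith [abs_nonneg (Real.sinh (ω * x))]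
  have hsum : |gFun t ω x| ≤ |Real.sinh (ω * x) * Real.exp (-t * cFun x)|
      + |Real.sinh ((ω - t) * x)| := by
    unfold gFun
    exact abs_sub _ _
  have he1 := cosh_one_le_exp_one
  have he2 := Real.exp_pos 1
  linarith

include hω0 hω1 ht htω in
lemma gDeriv_global (x : ℝ) :
    |gDeriv t ω x| ≤ 60 * Real.exp (-(min (ω - t) 2⁻¹ * |x|)) := by
  set δ := min (ω - t) 2⁻¹ with hδ
  have hδ0 : 0 < δ := lt_min (by linarith) (by norm_num)
  have hδh : δ ≤ 2⁻¹ := min_le_right _ _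
  have hδd : δ ≤ ω - t := min_le_left _ _
  have key : ∀ y : ℝ, 0 ≤ y → |gDeriv t ω y| ≤ 60 * Real.exp (-(δ * y)) := by
    intro y hy
    rcases le_or_gt y 1 with hy1 | hy1
    · have := gDeriv_crude hω0 hω1 ht htω (x := y) (by rwa [abs_of_nonneg hy])
      have hexp : Real.exp (-1) ≤ Real.exp (-(δ * y)) := by
        apply Real.exp_le_exp.2
        nlinarith
      have he3 : Real.exp 1 ≤ 3 := by
        nlinarith [Real.exp_one_lt_d9]
      have hprod : Real.exp 1 * Real.exp (-1) = 1 := by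
        rw [← Real.exp_add]; norm_num
      nlinarith [Real.exp_pos (-(δ * y)), Real.exp_pos 1, Real.exp_pos (-1)]
    · have hb := gDeriv_decay hω0 hω1 ht htω hy1.le
      have h1 : Real.exp (-((ω - t) * y)) ≤ Real.exp (-(δ * y)) := by
        apply Real.exp_le_exp.2; nlinarith
      have h2 : Real.exp (-(y / 2)) ≤ Real.exp (-(δ * y)) := by
        apply Real.exp_le_exp.2; nlinarith
      have := Real.exp_pos (-(δ * y))
      linarith
  rcases le_or_gt 0 x with hx | hx
  · rw [abs_of_nonneg hx]; exact key x hx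
  · rw [abs_of_neg hx]
    have := key (-x) (by linarith)
    rwa [gDeriv_even] at this

include hω0 hω1 ht htω in
lemma gFun_global (x : ℝ) :
    |gFun t ω x| ≤ 60 * Real.exp (-(min (ω - t) 2⁻¹ * |x|)) := by
  set δ := min (ω - t) 2⁻¹ with hδ
  have hδ0 : 0 < δ := lt_min (by linarith) (by norm_num)
  have hδh : δ ≤ 2⁻¹ := min_le_right _ _
  have hδd : δ ≤ ω - t := min_le_left _ _
  have key : ∀ y : ℝ, 0 ≤ y → |gFun t ω y| ≤ 60 * Real.exp (-(δ * y)) := by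
    intro y hy
    rcases le_or_gt y 1 with hy1 | hy1
    · have := gFun_crude hω0 hω1 ht htω (x := y) (by rwa [abs_of_nonneg hy])
      have hexp : Real.exp (-1) ≤ Real.exp (-(δ * y)) := by
        apply Real.exp_le_exp.2
        nlinarith
      have he3 : Real.exp 1 ≤ 3 := by
        nlinarith [Real.exp_one_lt_d9]
      have hprod : Real.exp 1 * Real.exp (-1) = 1 := by
        rw [← Real.exp_add]; norm_num
      nlinarith [Real.exp_pos (-(δ * y)), Real.exp_pos 1, Real.exp_pos (-1)]
    · have hb := gFun_decay hω0 hω1 ht htω hy1.le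
      have h1 : Real.exp (-((ω - t) * y)) ≤ Real.exp (-(δ * y)) := by
        apply Real.exp_le_exp.2; nlinarith
      have h2 : Real.exp (-(y / 2)) ≤ Real.exp (-(δ * y)) := by
        apply Real.exp_le_exp.2; nlinarith
      have := Real.exp_pos (-(δ * y))
      linarith
  rcases le_or_gt 0 x with hx | hx
  · rw [abs_of_nonneg hx]; exact key x hx
  · rw [abs_of_neg hx]
    have := key (-x) (by linarith)
    rwa [gFun_odd, abs_neg] at this

end global

lemma integrable_exp_neg_abs {b : ℝ} (hb : 0 < b) :
    Integrable (fun x : ℝ => Real.exp (-(b * |x|))) := by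
  have h1 : IntegrableOn (fun x : ℝ => Real.exp (-(b * |x|))) (Ioi 0) := by
    apply (exp_neg_integrableOn_Ioi 0 hb).congr_fun ?_ measurableSet_Ioi
    intro x hx
    have hx0 : (0:ℝ) < x := hx
    show Real.exp (-b * x) = Real.exp (-(b * |x|))
    rw [abs_of_pos hx0]
    ring_nf
  have h2 : IntegrableOn (fun x : ℝ => Real.exp (-(b * |x|))) (Iic 0) := by
    have m : MeasurableEmbedding fun x : ℝ => -x := (Homeomorph.neg ℝ).measurableEmbedding
    rw [← Measure.map_neg_eq_self (volume : Measure ℝ), m.integrableOn_map_iff]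
    simp_rw [Function.comp_def, abs_neg, neg_preimage, neg_Iic, neg_zero]
    exact Iff.mpr integrableOn_Ici_iff_integrableOn_Ioi h1
  rw [← integrableOn_univ, ← Iic_union_Ioi (a := (0:ℝ))]
  exact h2.union h1

section intg

variable {t ω : ℝ} (hω0 : 0 < ω) (hω1 : ω < 1) (ht : 0 < t) (htω : t < ω)

include hω0 hω1 ht htω in
lemma integrable_gDeriv : Integrable (gDeriv t ω) := by
  have hδ0 : 0 < min (ω - t) 2⁻¹ := lt_min (by linarith) (by norm_num)
  have hdom := (integrable_exp_neg_abs hδ0).const_mul 60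
  apply Integrable.mono' hdom
  · rw [← deriv_gFun]
    exact aestronglyMeasurable_deriv _ _
  · filter_upwards with x
    rw [Real.norm_eq_abs]
    exact gDeriv_global hω0 hω1 ht htω x

include hω0 hω1 ht htω in
lemma integrable_gFun : Integrable (gFun t ω) := by
  have hδ0 : 0 < min (ω - t) 2⁻¹ := lt_min (by linarith) (by norm_num)
  have hdom := (integrable_exp_neg_abs hδ0).const_mul 60
  apply Integrable.mono' hdom
  · have hc : Continuous (gFun t ω) := by
      have : Differentiable ℝ (gFun t ω) := fun x =>
        (hasDerivAt_gFun t ω x).differentiableAt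
      exact this.continuous
    exact hc.aestronglyMeasurable
  · filter_upwards with x
    rw [Real.norm_eq_abs]
    exact gFun_global hω0 hω1 ht htω x

end intg

lemma keyA (h : ℝ → ℝ) (ξ : ℝ) :
    (∫ x : ℝ, Complex.exp (-Complex.I * x * ξ) * ((h x : ℝ) : ℂ))
      = FourierTransform.fourier (fun x => ((h x : ℝ) : ℂ)) (ξ / (2 * Real.pi)) := by
  rw [Real.fourier_real_eq_integral_exp_smul]
  refine integral_congr_ae (Filter.Eventually.of_forall fun x => ?_)
  simp only [smul_eq_mul]
  congr 2
  have hr : -2 * Real.pi * x * (ξ / (2 * Real.pi)) = -(x * ξ) := by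
    field_simp
  rw [hr]
  push_cast
  ring

/-- For `ω ∈ (0,1)` and `0 < t < ω`, the function
`g(x) = sinh(ωx) e^{-t c(x)} - sinh((ω-t)x)` has a Lebesgue-integrable derivative on `ℝ`,
and for every `ξ ∈ ℝ`,
`∫_ℝ e^{-ixξ} g'(x) dx = iξ ∫_ℝ e^{-ixξ} g(x) dx = 2ξ ∫_0^∞ sin(xξ) g(x) dx`. -/
theorem stmt9 (t ω : ℝ) (hω : ω ∈ Set.Ioo (0 : ℝ) 1) (ht : 0 < t) (htω : t < ω) :
    MeasureTheory.Integrable (deriv (gFun t ω)) ∧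
    ∀ ξ : ℝ,
      (∫ x : ℝ, Complex.exp (-Complex.I * x * ξ) * (Complex.ofReal (deriv (gFun t ω) x))) =
          Complex.I * ξ * ∫ x : ℝ, Complex.exp (-Complex.I * x * ξ) * (Complex.ofReal (gFun t ω x)) ∧
      Complex.I * ξ * (∫ x : ℝ, Complex.exp (-Complex.I * x * ξ) * (Complex.ofReal (gFun t ω x))) =
        2 * ξ * Complex.ofReal (∫ x in Set.Ioi (0 : ℝ), Real.sin (x * ξ) * gFun t ω x) := by
  obtain ⟨hω0, hω1⟩ := hω
  have hgd_int : Integrable (gDeriv t ω) := integrable_gDeriv hω0 hω1 ht htω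
  have hg_int : Integrable (gFun t ω) := integrable_gFun hω0 hω1 ht htω
  have hderiv : deriv (gFun t ω) = gDeriv t ω := deriv_gFun t ω
  refine ⟨by rw [hderiv]; exact hgd_int, fun ξ => ?_⟩
  set fC : ℝ → ℂ := fun x => ((gFun t ω x : ℝ) : ℂ) with hfC
  have hfC_int : Integrable fC := hg_int.ofReal
  have hfC_diff : Differentiable ℝ fC := fun x =>
    ((hasDerivAt_gFun t ω x).ofReal_comp).differentiableAt
  have hderivC : deriv fC = fun x => ((gDeriv t ω x : ℝ) : ℂ) :=
    funext fun x => ((hasDerivAt_gFun t ω x).ofReal_comp).deriv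
  have hfC'_int : Integrable (deriv fC) := by rw [hderivC]; exact hgd_int.ofReal
  set w : ℝ := ξ / (2 * Real.pi) with hw
  have hstep1 : (∫ x : ℝ, Complex.exp (-Complex.I * x * ξ) * (Complex.ofReal (deriv (gFun t ω) x)))
      = FourierTransform.fourier (deriv fC) w := by
    rw [hderiv, hderivC]
    exact keyA (gDeriv t ω) ξ
  have hFT := Real.fourier_deriv hfC_int hfC_diff hfC'_int
  have hstep2 : FourierTransform.fourier (deriv fC) w = Complex.I * ξ * FourierTransform.fourier fC w := by
    rw [hFT]
    simp only [smul_eq_mul]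
    congr 1
    have hπ : (Real.pi : ℂ) ≠ 0 := Complex.ofReal_ne_zero.2 Real.pi_ne_zero
    rw [hw]
    push_cast
    field_simp
  have hstep3 : FourierTransform.fourier fC w =
      ∫ x : ℝ, Complex.exp (-Complex.I * x * ξ) * (Complex.ofReal (gFun t ω x)) :=
    (keyA (gFun t ω) ξ).symm
  have hfirst : (∫ x : ℝ, Complex.exp (-Complex.I * x * ξ) * (Complex.ofReal (deriv (gFun t ω) x)))
      = Complex.I * ξ * ∫ x : ℝ, Complex.exp (-Complex.I * x * ξ) * (Complex.ofReal (gFun t ω x)) := by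
    rw [hstep1, hstep2, hstep3]
  refine ⟨hfirst, ?_⟩
  -- second equality
  have hcos_int : Integrable (fun x => Real.cos (x * ξ) * gFun t ω x) := by
    apply hg_int.bdd_mul (c := 1)
    · exact (Real.continuous_cos.comp (continuous_id.mul continuous_const)).aestronglyMeasurable
    · exact Filter.Eventually.of_forall fun x => by rw [Real.norm_eq_abs]; exact Real.abs_cos_le_one _
  have hsin_int : Integrable (fun x => Real.sin (x * ξ) * gFun t ω x) := by
    apply hg_int.bdd_mul (c := 1)
    · exact (Real.continuous_sin.comp (continuous_id.mul continuous_const)).aestronglyMeasurable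
    · exact Filter.Eventually.of_forall fun x => by rw [Real.norm_eq_abs]; exact Real.abs_sin_le_one _
  have hsplit : ∀ x : ℝ, Complex.exp (-Complex.I * x * ξ) * (Complex.ofReal (gFun t ω x))
      = Complex.ofReal (Real.cos (x * ξ) * gFun t ω x)
        - Complex.I * Complex.ofReal (Real.sin (x * ξ) * gFun t ω x) := by
    intro x
    have e1 : (-Complex.I * x * ξ) = ((-(x * ξ) : ℝ) : ℂ) * Complex.I := by push_cast; ring
    rw [e1, Complex.exp_mul_I, ← Complex.ofReal_cos, ← Complex.ofReal_sin]
    push_cast [Real.cos_neg, Real.sin_neg]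
    ring
  have hJ : (∫ x : ℝ, Complex.exp (-Complex.I * x * ξ) * (Complex.ofReal (gFun t ω x)))
      = Complex.ofReal (∫ x : ℝ, Real.cos (x * ξ) * gFun t ω x)
        - Complex.I * Complex.ofReal (∫ x : ℝ, Real.sin (x * ξ) * gFun t ω x) := by
    simp_rw [hsplit]
    have hcosC : Integrable (fun x : ℝ => Complex.ofReal (Real.cos (x * ξ) * gFun t ω x)) volume :=
      hcos_int.ofReal
    have hsinC : Integrable (fun x : ℝ => Complex.ofReal (Real.sin (x * ξ) * gFun t ω x)) volume :=
      hsin_int.ofReal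
    have hsub := integral_sub hcosC (hsinC.const_mul Complex.I)
    rw [hsub, integral_const_mul]
    congr 1
    · exact integral_ofReal
    · congr 1
      exact integral_ofReal
  have hcos0 : (∫ x : ℝ, Real.cos (x * ξ) * gFun t ω x) = 0 := by
    have h1 := integral_neg_eq_self (fun x : ℝ => Real.cos (x * ξ) * gFun t ω x) volume
    have h2 : (fun x : ℝ => Real.cos (-x * ξ) * gFun t ω (-x))
        = fun x : ℝ => -(Real.cos (x * ξ) * gFun t ω x) := by
      funext x
      rw [gFun_odd, neg_mul, Real.cos_neg]
      ring
    rw [h2, integral_neg] at h1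
    linarith
  have hsin2 : (∫ x : ℝ, Real.sin (x * ξ) * gFun t ω x)
      = 2 * ∫ x in Set.Ioi (0:ℝ), Real.sin (x * ξ) * gFun t ω x := by
    have heq : ∀ x : ℝ, Real.sin (x * ξ) * gFun t ω x
        = (fun y => Real.sin (y * ξ) * gFun t ω y) |x| := by
      intro x
      rcases le_or_gt 0 x with h | h
      · rw [abs_of_nonneg h]
      · rw [abs_of_neg h]
        simp only
        rw [neg_mul, Real.sin_neg, gFun_odd]
        ring
    calc (∫ x : ℝ, Real.sin (x * ξ) * gFun t ω x)
        = ∫ x : ℝ, (fun y => Real.sin (y * ξ) * gFun t ω y) |x| :=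
          integral_congr_ae (Filter.Eventually.of_forall heq)
      _ = 2 * ∫ x in Set.Ioi (0:ℝ), Real.sin (x * ξ) * gFun t ω x := by
          exact integral_comp_abs (f := fun y => Real.sin (y * ξ) * gFun t ω y)
  rw [hJ, hcos0, hsin2]
  push_cast
  linear_combination (-2 * (ξ:ℂ) * ((∫ x in Set.Ioi (0:ℝ), Real.sin (x * ξ) * gFun t ω x : ℝ) : ℂ)) * Complex.I_sq
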